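/- (Lemma 2, part (prop_6.3).) Fix ε_ν ∈ (0,1), and suppose the segmentation R used for estimation is an oversegmentation of the true segmentation R° with every region of R nonempty, with Assumptions 1 and 2 in force. For each n and each admissible pair (ν_d, ν_u), let μ̂_n(ν_d, ν_u) ∈ Θ(R) be a maximizer of μ ↦ Σ_{t=⌊n·ν_d⌋+1}^{⌊n·ν_u⌋} l((R,μ); X_t) over Θ(R). Then almost surely, for every pixel i ∈ P and band w, sup over all admissible pairs (ν_d, ν_u) of | μ̂_n(ν_d,ν_u)(R(i),w) − μ°(R°(i),w) | → 0 as n → ∞. -/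

import Mathlib

open MeasureTheory ProbabilityTheory Filter Topology

/-- The reduced Poisson log-likelihood of a count array `x` under segmentation `R`
and rates `μ`: `l((R,μ); x) = Σ_w Σ_i (x(i,w)·log μ(R i, w) − μ(R i, w))`. -/
noncomputable def loglik {NI NW m : ℕ} (R : Fin NI → Fin m)
    (μ : Fin m × Fin NW → ℝ) (x : Fin NI × Fin NW → ℕ) : ℝ :=
  ∑ w : Fin NW, ∑ i : Fin NI, ((x (i, w) : ℝ) * Real.log (μ (R i, w)) - μ (R i, w))

/-- Gradient of `l((R,μ); x)` in `μ`: its `(h,w)` entry is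
`Σ_{i : R i = h} (x(i,w)/μ(h,w) − 1)`. -/
noncomputable def loglikGrad {NI NW m : ℕ} (R : Fin NI → Fin m)
    (μ : Fin m × Fin NW → ℝ) (x : Fin NI × Fin NW → ℕ) :
    Fin m × Fin NW → ℝ :=
  fun hw => ∑ i : Fin NI,
    if R i = hw.1 then ((x (i, hw.2) : ℝ) / μ hw - 1) else 0

/-- Diagonal of the Hessian of `l((R,μ); x)` in `μ`: its `(h,w)` entry is
`−Σ_{i : R i = h} x(i,w)/μ(h,w)²`. -/
noncomputable def loglikHess {NI NW m : ℕ} (R : Fin NI → Fin m)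
    (μ : Fin m × Fin NW → ℝ) (x : Fin NI × Fin NW → ℕ) :
    Fin m × Fin NW → ℝ :=
  fun hw => -∑ i : Fin NI,
    if R i = hw.1 then (x (i, hw.2) : ℝ) / (μ hw) ^ 2 else 0

/-- The expected log-likelihood `L(R,μ)` when the true per-pixel rates are
`λ°(i,w) = μ°(R° i, w)`. -/
noncomputable def expLoglik {NI NW m0 m : ℕ} (R0 : Fin NI → Fin m0)
    (μ0 : Fin m0 × Fin NW → ℝ) (R : Fin NI → Fin m) (μ : Fin m × Fin NW → ℝ) : ℝ :=
  ∑ w : Fin NW, ∑ i : Fin NI, (μ0 (R0 i, w) * Real.log (μ (R i, w)) - μ (R i, w))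

/-- Gradient of `L(R,μ)` in `μ`. -/
noncomputable def expLoglikGrad {NI NW m0 m : ℕ} (R0 : Fin NI → Fin m0)
    (μ0 : Fin m0 × Fin NW → ℝ) (R : Fin NI → Fin m) (μ : Fin m × Fin NW → ℝ) :
    Fin m × Fin NW → ℝ :=
  fun hw => ∑ i : Fin NI,
    if R i = hw.1 then (μ0 (R0 i, hw.2) / μ hw - 1) else 0

/-- Diagonal of the Hessian of `L(R,μ)` in `μ`. -/
noncomputable def expLoglikHess {NI NW m0 m : ℕ} (R0 : Fin NI → Fin m0)
    (μ0 : Fin m0 × Fin NW → ℝ) (R : Fin NI → Fin m) (μ : Fin m × Fin NW → ℝ) :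
    Fin m × Fin NW → ℝ :=
  fun hw => -∑ i : Fin NI,
    if R i = hw.1 then μ0 (R0 i, hw.2) / (μ hw) ^ 2 else 0

/-- The compact parameter box `Θ(R) = [C_d, C_u]^(Fin m × Fin N_W)`. -/
def Theta (Cd Cu : ℝ) (m NW : ℕ) : Set (Fin m × Fin NW → ℝ) :=
  {μ | ∀ p, μ p ∈ Set.Icc Cd Cu}

/-- An admissible pair of normalized endpoints: `0 ≤ ν_d < ν_u ≤ 1` with
`ν_u − ν_d > ε_ν`. -/
def AdmPair (epsnu : ℝ) : Type :=
  {q : ℝ × ℝ // 0 ≤ q.1 ∧ q.1 < q.2 ∧ q.2 ≤ 1 ∧ epsnu < q.2 - q.1}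

/-- `Rb` is an oversegmentation of `Rs`. -/
def Overseg {P : Type*} {m1 m2 : ℕ} (Rb : P → Fin m1) (Rs : P → Fin m2) : Prop :=
  ∀ i j, Rb i = Rb j → Rs i = Rs j

/-- Regions `p` and `q` of the segmentation `R` are neighbouring: some graph edge
joins a pixel of `R⁻¹(p)` to a pixel of `R⁻¹(q)`. -/
def Neighbouring {NI m : ℕ} (G : SimpleGraph (Fin NI)) (R : Fin NI → Fin m)
    (p q : Fin m) : Prop :=
  ∃ i j, G.Adj i j ∧ R i = p ∧ R j = q


-- ### auxiliary lemmas ###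
open scoped NNReal ENNReal


lemma aux_hasSum_poisson_mean (r : ℝ≥0) :
    HasSum (fun n : ℕ => (n : ℝ) * poissonPMFReal r n) r := by
  have h := (poissonPMFRealSum r).mul_left (r : ℝ)
  have h2 : (fun n : ℕ => ((n + 1 : ℕ) : ℝ) * poissonPMFReal r (n + 1))
      = fun n : ℕ => (r : ℝ) * poissonPMFReal r n := by
    ext n
    unfold poissonPMFReal
    have hfac : ((n + 1).factorial : ℝ) = (n + 1) * n.factorial := by
      push_cast [Nat.factorial_succ]; ring
    have hne : (n.factorial : ℝ) ≠ 0 := Nat.cast_ne_zero.2 n.factorial_ne_zero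
    rw [hfac]
    push_cast
    field_simp
    ring
  have h3 : HasSum (fun n : ℕ => ((n + 1 : ℕ) : ℝ) * poissonPMFReal r (n + 1)) (r : ℝ) := by
    rw [h2]; rw [mul_one] at h; exact h
  have := (hasSum_nat_add_iff (f := fun n : ℕ => (n : ℝ) * poissonPMFReal r n) 1).1 (by simpa using h3)
  simpa using this

lemma aux_poisson_integrable (r : ℝ≥0) :
    Integrable (fun n : ℕ => (n : ℝ)) (poissonMeasure r) := by
  have hPM : poissonMeasure r = (poissonPMF r).toMeasure :=
    Measure.ext_iff_singleton.2 (fun n => by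
      rw [poissonMeasure_singleton, PMF.toMeasure_apply_singleton _ _ (measurableSet_singleton n)]; rfl)
  constructor
  · exact (measurable_from_top (f := fun n : ℕ => (n : ℝ))).aestronglyMeasurable
  · rw [hasFiniteIntegral_def]
    have hsingle : ∀ n : ℕ, poissonMeasure r {n} = ENNReal.ofReal (poissonPMFReal r n) := by
      intro n
      rw [hPM, PMF.toMeasure_apply_singleton _ _ (measurableSet_singleton n)]
      rfl
    calc ∫⁻ n, ‖(n : ℝ)‖₊ ∂(poissonMeasure r)
        = ∑' n : ℕ, ‖(n : ℝ)‖₊ * poissonMeasure r {n} := lintegral_countable' _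
      _ = ∑' n : ℕ, ENNReal.ofReal ((n : ℝ) * poissonPMFReal r n) := by
          congr 1; ext n
          rw [hsingle n, ENNReal.ofReal_mul (by positivity)]
          congr 1
          rw [ENNReal.ofReal_natCast]
          simp [Real.nnnorm_natCast]
      _ = ENNReal.ofReal (∑' n : ℕ, (n : ℝ) * poissonPMFReal r n) := by
          rw [ENNReal.ofReal_tsum_of_nonneg]
          · intro n; exact mul_nonneg (Nat.cast_nonneg n) poissonPMFReal_nonneg
          · exact (aux_hasSum_poisson_mean r).summable
      _ < ⊤ := ENNReal.ofReal_lt_top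

lemma aux_poisson_mean (r : ℝ≥0) :
    ∫ n, (n : ℝ) ∂(poissonMeasure r) = r := by
  have hPM : poissonMeasure r = (poissonPMF r).toMeasure :=
    Measure.ext_iff_singleton.2 (fun n => by
      rw [poissonMeasure_singleton, PMF.toMeasure_apply_singleton _ _ (measurableSet_singleton n)]; rfl)
  rw [hPM, PMF.integral_eq_tsum _ _ (by rw [← hPM]; exact aux_poisson_integrable r)]
  have : ∀ n : ℕ, ((poissonPMF r n).toReal : ℝ) • (n : ℝ) = (n : ℝ) * poissonPMFReal r n := by
    intro n
    have h0 : poissonPMF r n = ENNReal.ofReal (poissonPMFReal r n) := rfl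
    rw [h0, ENNReal.toReal_ofReal poissonPMFReal_nonneg, smul_eq_mul, mul_comm]
  simp_rw [this]
  exact (aux_hasSum_poisson_mean r).tsum_eq


lemma aux_indepFun_sum {Ω ι : Type*} [MeasurableSpace Ω] {μ : Measure Ω}
    {f : ι → Ω → ℕ} (hf : ∀ i, Measurable (f i))
    (hind : iIndepFun f μ)
    {S T : Finset ι} (hST : Disjoint S T) :
    IndepFun (fun ω => ∑ i ∈ S, f i ω) (fun ω => ∑ i ∈ T, f i ω) μ := by
  classical
  have h := hind.indepFun_finset S T hST hf
  have hgS : Measurable (fun v : {x // x ∈ S} → ℕ => ∑ i, v i) :=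
    Finset.univ.measurable_sum (fun i _ => measurable_pi_apply i)
  have hgT : Measurable (fun v : {x // x ∈ T} → ℕ => ∑ i, v i) :=
    Finset.univ.measurable_sum (fun i _ => measurable_pi_apply i)
  have h2 := h.comp hgS hgT
  have e1 : ((fun v : {x // x ∈ S} → ℕ => ∑ i, v i) ∘ (fun a (i : S) => f i a))
      = fun a => ∑ i ∈ S, f i a := by
    funext a; exact Finset.sum_coe_sort S (fun i => f i a)
  have e2 : ((fun v : {x // x ∈ T} → ℕ => ∑ i, v i) ∘ (fun a (i : T) => f i a))
      = fun a => ∑ i ∈ T, f i a := by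
    funext a; exact Finset.sum_coe_sort T (fun i => f i a)
  rwa [e1, e2] at h2

lemma aux_identDistrib_add {Ω : Type*} [MeasurableSpace Ω] {μ : Measure Ω}
    [IsProbabilityMeasure μ]
    {f g f' g' : Ω → ℕ} (hf : Measurable f) (hg : Measurable g)
    (hf' : Measurable f') (hg' : Measurable g')
    (hff' : IdentDistrib f f' μ μ) (hgg' : IdentDistrib g g' μ μ)
    (hfg : IndepFun f g μ) (hfg' : IndepFun f' g' μ) :
    IdentDistrib (fun ω => f ω + g ω) (fun ω => f' ω + g' ω) μ μ := by
  have hadd : Measurable (fun p : ℕ × ℕ => p.1 + p.2) := measurable_fst.add measurable_snd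
  refine ⟨(hf.add hg).aemeasurable, (hf'.add hg').aemeasurable, ?_⟩
  have h1 := (indepFun_iff_map_prod_eq_prod_map_map hf.aemeasurable hg.aemeasurable).1 hfg
  have h2 := (indepFun_iff_map_prod_eq_prod_map_map hf'.aemeasurable hg'.aemeasurable).1 hfg'
  calc μ.map (fun ω => f ω + g ω)
      = (μ.map (fun ω => (f ω, g ω))).map (fun p : ℕ × ℕ => p.1 + p.2) := by
        rw [Measure.map_map hadd (hf.prodMk hg)]; rfl
    _ = (μ.map (fun ω => (f' ω, g' ω))).map (fun p : ℕ × ℕ => p.1 + p.2) := by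
        rw [h1, h2, hff'.map_eq, hgg'.map_eq]
    _ = μ.map (fun ω => f' ω + g' ω) := by
        rw [Measure.map_map hadd (hf'.prodMk hg')]; rfl

lemma aux_identDistrib_sum {Ω ι κ : Type*} [MeasurableSpace Ω] {μ : Measure Ω}
    [IsProbabilityMeasure μ]
    {f : ι → Ω → ℕ} (hf : ∀ i, Measurable (f i))
    (hind : iIndepFun f μ)
    (e1 e2 : κ → ι) (he1 : Function.Injective e1) (he2 : Function.Injective e2)
    (hid : ∀ k, IdentDistrib (f (e1 k)) (f (e2 k)) μ μ)
    (B : Finset κ) :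
    IdentDistrib (fun ω => ∑ k ∈ B, f (e1 k) ω) (fun ω => ∑ k ∈ B, f (e2 k) ω) μ μ := by
  classical
  induction B using Finset.induction_on with
  | empty => exact ⟨aemeasurable_const, aemeasurable_const, rfl⟩
  | insert a B ha ih =>
    have hsum1 : Measurable (fun ω => ∑ k ∈ B, f (e1 k) ω) :=
      Finset.measurable_sum B (fun k _ => hf (e1 k))
    have hsum2 : Measurable (fun ω => ∑ k ∈ B, f (e2 k) ω) :=
      Finset.measurable_sum B (fun k _ => hf (e2 k))
    have hindep1 : IndepFun (f (e1 a)) (fun ω => ∑ k ∈ B, f (e1 k) ω) μ := by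
      have hdisj : Disjoint ({e1 a} : Finset ι) (B.image e1) := by
        simp only [Finset.disjoint_left, Finset.mem_singleton, Finset.mem_image]
        rintro x rfl ⟨k, hk, hk2⟩
        exact ha (he1 hk2 ▸ hk)
      have := aux_indepFun_sum hf hind hdisj
      simpa [Finset.sum_image (fun x _ y _ h => he1 h)] using this
    have hindep2 : IndepFun (f (e2 a)) (fun ω => ∑ k ∈ B, f (e2 k) ω) μ := by
      have hdisj : Disjoint ({e2 a} : Finset ι) (B.image e2) := by
        simp only [Finset.disjoint_left, Finset.mem_singleton, Finset.mem_image]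
        rintro x rfl ⟨k, hk, hk2⟩
        exact ha (he2 hk2 ▸ hk)
      have := aux_indepFun_sum hf hind hdisj
      simpa [Finset.sum_image (fun x _ y _ h => he2 h)] using this
    have := aux_identDistrib_add (hf (e1 a)) hsum1 (hf (e2 a)) hsum2 (hid a) ih hindep1 hindep2
    simpa [Finset.sum_insert ha] using this


/-- Any maximizer on `[Cd,Cu]` of `x ↦ S·log x − c·x` equals the clamp of `S/c`. -/
lemma aux_argmax_clamp {S c Cd Cu : ℝ} (hS : 0 ≤ S) (hc : 0 < c)
    (hCd : 0 < Cd) (hCdCu : Cd ≤ Cu) {v : ℝ} (hv : v ∈ Set.Icc Cd Cu)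
    (hmax : ∀ u ∈ Set.Icc Cd Cu, S * Real.log u - c * u ≤ S * Real.log v - c * v) :
    v = max Cd (min Cu (S / c)) := by
  set ρ : ℝ := S / c with hρdef
  have hρ0 : 0 ≤ ρ := div_nonneg hS hc.le
  set u₀ : ℝ := max Cd (min Cu ρ) with hu₀def
  have hu₀mem : u₀ ∈ Set.Icc Cd Cu := by
    constructor
    · exact le_max_left _ _
    · exact max_le hCdCu (min_le_left _ _)
  set g : ℝ → ℝ := fun x => S * Real.log x - c * x with hg
  have hS_eq : S = c * ρ := by rw [hρdef]; field_simp
  have hderiv : ∀ x : ℝ, 0 < x → HasDerivAt g (S * x⁻¹ - c) x := by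
    intro x hx
    have hd1 : HasDerivAt (fun y => S * Real.log y) (S * x⁻¹) x :=
      (Real.hasDerivAt_log hx.ne').const_mul S
    have hd2 : HasDerivAt (fun y => c * y) c x := by
      simpa using (hasDerivAt_id x).const_mul c
    exact hd1.sub hd2
  have hcont : ∀ a b : ℝ, 0 < a → ContinuousOn g (Set.Icc a b) := by
    intro a b ha
    apply ContinuousOn.sub
    · exact (Real.continuousOn_log.mono (fun x hx => ne_of_gt (lt_of_lt_of_le ha hx.1))).const_smul S
    · exact (continuous_const.mul continuous_id).continuousOn
  have hmono : StrictMonoOn g (Set.Icc Cd u₀) := by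
    apply strictMonoOn_of_deriv_pos (convex_Icc _ _) (hcont _ _ hCd)
    intro x hx
    rw [interior_Icc] at hx
    have hx0 : 0 < x := lt_trans hCd hx.1
    have hxρ : x < ρ := by
      have h1 : Cd < u₀ := lt_of_le_of_lt hx.1.le hx.2
      have h4 : Cd < min Cu ρ := (lt_max_iff.1 (hu₀def ▸ h1)).resolve_left (lt_irrefl Cd)
      have h2 : u₀ ≤ ρ := by
        rw [hu₀def]
        exact max_le (le_trans h4.le (min_le_right _ _)) (min_le_right _ _)
      exact lt_of_lt_of_le hx.2 h2
    rw [(hderiv x hx0).deriv]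
    rw [hS_eq]
    have : c * ρ * x⁻¹ - c = c * (ρ - x) * x⁻¹ := by field_simp
    rw [this]
    exact mul_pos (mul_pos hc (by linarith)) (inv_pos.2 hx0)
  have hanti : StrictAntiOn g (Set.Icc u₀ Cu) := by
    apply strictAntiOn_of_deriv_neg (convex_Icc _ _) (hcont _ _ (lt_of_lt_of_le hCd hu₀mem.1))
    intro x hx
    rw [interior_Icc] at hx
    have hx0 : 0 < x := lt_trans (lt_of_lt_of_le hCd hu₀mem.1) hx.1
    have hρx : ρ < x := by
      have h1 : u₀ < Cu := lt_trans hx.1 hx.2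
      have hmin : min Cu ρ < Cu := lt_of_le_of_lt (le_max_right Cd _) (hu₀def ▸ h1)
      have hminr : min Cu ρ = ρ := by
        rcases le_total Cu ρ with hcr | hcr
        · exact absurd (min_eq_left hcr ▸ hmin) (lt_irrefl _)
        · exact min_eq_right hcr
      have h2 : ρ ≤ u₀ := by
        rw [hu₀def]
        exact le_trans (le_of_eq hminr.symm) (le_max_right _ _)
      exact lt_of_le_of_lt h2 hx.1
    rw [(hderiv x hx0).deriv]
    rw [hS_eq]
    have : c * ρ * x⁻¹ - c = -(c * (x - ρ) * x⁻¹) := by field_simp; ring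
    rw [this]
    have : 0 < c * (x - ρ) * x⁻¹ := by
      apply mul_pos (mul_pos hc (by linarith)) (inv_pos.2 hx0)
    linarith
  by_contra hne
  have hgv : g u₀ ≤ g v := hmax u₀ hu₀mem
  rcases lt_or_gt_of_ne hne with hlt | hgt
  · have : g v < g u₀ := by
      apply hmono ⟨hv.1, hlt.le⟩ ⟨hu₀mem.1, le_refl _⟩ hlt
    linarith
  · have : g v < g u₀ := by
      apply hanti ⟨le_refl _, hu₀mem.2⟩ ⟨hgt.le, hv.2⟩ hgt
    linarith

/-- Clamping to `[Cd,Cu]` does not move a point further from `μ̄ ∈ [Cd,Cu]`. -/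
lemma aux_clamp_close {Cd Cu ρ μb : ℝ} (h1 : Cd ≤ μb) (h2 : μb ≤ Cu) :
    |max Cd (min Cu ρ) - μb| ≤ |ρ - μb| := by
  rcases le_total ρ μb with h | h
  · have ha : min Cu ρ = ρ := min_eq_right (le_trans h h2)
    rw [ha]
    have hb : ρ ≤ max Cd ρ := le_max_right _ _
    have hc : max Cd ρ ≤ μb := max_le h1 h
    rw [abs_of_nonpos (by linarith), abs_of_nonpos (by linarith)]
    linarith
  · have ha : μb ≤ min Cu ρ ∨ min Cu ρ = ρ := by
      rcases min_cases Cu ρ with ⟨h3, _⟩ | ⟨h3, _⟩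
      · left; rw [h3]; exact h2
      · right; exact h3
    have hmle : min Cu ρ ≤ ρ := min_le_right _ _
    have hmge : μb ≤ min Cu ρ := by
      rcases ha with ha | ha
      · exact ha
      · rw [ha]; exact h
    have hmax : max Cd (min Cu ρ) = min Cu ρ := max_eq_right (le_trans h1 hmge)
    rw [hmax, abs_of_nonneg (by linarith), abs_of_nonneg (by linarith)]
    linarith

/-- Uniform window bound from the SLLN-type convergence of `U n / n`. -/
lemma aux_window {U : ℕ → ℝ} {L : ℝ} (hU : Tendsto (fun n : ℕ => U n / n) atTop (𝓝 L))
    {ε δ : ℝ} (hε : 0 < ε) (hδ : 0 < δ) :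
    ∀ᶠ n : ℕ in atTop, ∀ a b : ℕ, a ≤ n + 1 → b ≤ n + 1 →
      δ * n ≤ (b : ℝ) - (a : ℝ) →
      |U b - U a - ((b : ℝ) - (a : ℝ)) * L| ≤ ε * ((n : ℝ) * δ) := by
  set η : ℝ := ε * δ / 8 with hη
  have hη0 : 0 < η := by positivity
  have h1 : ∀ᶠ k : ℕ in atTop, |U k / k - L| ≤ η := by
    have := hU.eventually (Metric.ball_mem_nhds L hη0)
    filter_upwards [this] with k hk
    exact le_of_lt (by simpa [Real.dist_eq] using hk)
  obtain ⟨K, hK⟩ := h1.exists_forall_of_atTop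
  set M : ℝ := ∑ k ∈ Finset.range (K + 1), |U k - k * L| with hM
  have hM0 : 0 ≤ M := Finset.sum_nonneg (fun _ _ => abs_nonneg _)
  have hbound : ∀ k : ℕ, ∀ n : ℕ, k ≤ n + 1 → |U k - k * L| ≤ η * (n + 1) + M := by
    intro k n hk
    rcases le_or_gt K k with h | h
    · rcases Nat.eq_zero_or_pos k with rfl | hk0
      · -- k = 0 and K ≤ 0
        have := hK 0 h
        simp only [Nat.cast_zero, div_zero] at this  -- |0/0 - L| = |−L|? careful
        -- U 0 - 0 * L : we can't control U 0 from the limit; but K ≤ 0 means K = 0,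
        -- and 0 ∈ range (K+1), so |U 0 - 0| ≤ M
        have h0 : |U 0 - (0 : ℕ) * L| ≤ M := by
          apply Finset.single_le_sum (f := fun k => |U k - k * L|) (fun _ _ => abs_nonneg _)
          simp
        simpa using le_trans h0 (by linarith [mul_nonneg hη0.le (by positivity : (0:ℝ) ≤ (n:ℝ)+1)])
      · have hkr : (0 : ℝ) < k := by exact_mod_cast hk0
        have := hK k h
        have h2 : |U k - k * L| = k * |U k / k - L| := by
          rw [show U k - k * L = k * (U k / k - L) by field_simp [hkr.ne'], abs_mul, abs_of_pos hkr]
        rw [h2]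
        have h3 : (k : ℝ) * |U k / k - L| ≤ k * η := by
          exact mul_le_mul_of_nonneg_left this hkr.le
        have h4 : (k : ℝ) ≤ n + 1 := by exact_mod_cast hk
        nlinarith
    · have h0 : |U k - k * L| ≤ M := by
        apply Finset.single_le_sum (f := fun k => |U k - k * L|) (fun _ _ => abs_nonneg _)
        exact Finset.mem_range.2 (by omega)
      have : (0:ℝ) ≤ η * (n + 1) := by positivity
      linarith
  -- now choose n large
  have hcast : Tendsto (fun n : ℕ => (n : ℝ)) atTop atTop := tendsto_natCast_atTop_atTop
  filter_upwards [hcast.eventually_ge_atTop ((8 * M) / (ε * δ)), hcast.eventually_ge_atTop 4]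
    with n hn1 hn2
  intro a b ha hb hab
  have hUa := hbound a n ha
  have hUb := hbound b n hb
  have key : |U b - U a - ((b : ℝ) - (a : ℝ)) * L| ≤ 2 * (η * (n + 1) + M) := by
    have : U b - U a - ((b : ℝ) - (a : ℝ)) * L = (U b - b * L) - (U a - a * L) := by ring
    rw [this]
    calc |(U b - b * L) - (U a - a * L)| ≤ |U b - b * L| + |U a - a * L| := abs_sub _ _
      _ ≤ 2 * (η * (n + 1) + M) := by linarith
  have h5 : 2 * M ≤ ε * δ * n / 4 := by
    rw [div_le_iff₀ (by positivity : (0:ℝ) < ε * δ)] at hn1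
    · nlinarith
  have h6 : 2 * η * ((n:ℝ) + 1) ≤ ε * δ * n / 2 := by
    rw [hη]
    nlinarith
  calc |U b - U a - ((b : ℝ) - (a : ℝ)) * L| ≤ 2 * (η * (n + 1) + M) := key
    _ ≤ ε * δ * n / 2 + ε * δ * n / 4 := by linarith
    _ ≤ ε * ((n : ℝ) * δ) := by nlinarith

lemma aux_loglik_update {NI NW m : ℕ} (R : Fin NI → Fin m)
    (v : Fin m × Fin NW → ℝ) (c : Fin m × Fin NW) (u : ℝ) (x : Fin NI × Fin NW → ℕ) :
    loglik R (Function.update v c u) x = loglik R v x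
      + (∑ i' : Fin NI, if R i' = c.1 then (x (i', c.2) : ℝ) else 0)
          * (Real.log u - Real.log (v c))
      - (∑ i' : Fin NI, if R i' = c.1 then (1 : ℝ) else 0) * (u - v c) := by
  classical
  obtain ⟨h, w⟩ := c
  have key : ∀ (w' : Fin NW) (i' : Fin NI),
      ((x (i', w') : ℝ) * Real.log (Function.update v (h, w) u (R i', w'))
          - Function.update v (h, w) u (R i', w'))
      = ((x (i', w') : ℝ) * Real.log (v (R i', w')) - v (R i', w'))
        + (if w' = w ∧ R i' = h then
            ((x (i', w) : ℝ) * (Real.log u - Real.log (v (h, w))) - (u - v (h, w))) else 0) := by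
    intro w' i'
    rw [Function.update_apply]
    by_cases hc : (R i', w') = (h, w)
    · obtain ⟨h1, h2⟩ := Prod.mk.injEq .. ▸ hc
      rw [if_pos hc, if_pos ⟨h2, h1⟩, h2, h1]
      ring
    · have hc2 : ¬(w' = w ∧ R i' = h) := by
        rintro ⟨rfl, h2⟩; exact hc (by rw [h2])
      rw [if_neg hc, if_neg hc2]
      ring
  have hB : ∑ w' : Fin NW, ∑ i' : Fin NI,
      (if w' = w ∧ R i' = h then
        ((x (i', w) : ℝ) * (Real.log u - Real.log (v (h, w))) - (u - v (h, w))) else 0)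
      = (∑ i' : Fin NI, if R i' = h then (x (i', w) : ℝ) else 0)
          * (Real.log u - Real.log (v (h, w)))
        - (∑ i' : Fin NI, if R i' = h then (1 : ℝ) else 0) * (u - v (h, w)) := by
    have step1 : ∀ w' : Fin NW, (∑ i' : Fin NI,
        (if w' = w ∧ R i' = h then
          ((x (i', w) : ℝ) * (Real.log u - Real.log (v (h, w))) - (u - v (h, w))) else 0))
        = if w' = w then (∑ i' : Fin NI, if R i' = h then
            ((x (i', w) : ℝ) * (Real.log u - Real.log (v (h, w))) - (u - v (h, w))) else 0) else 0 := by
      intro w'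
      by_cases hw : w' = w
      · simp [hw]
      · simp [hw]
    have step2 : ∀ i' : Fin NI,
        (if R i' = h then ((x (i', w) : ℝ) * (Real.log u - Real.log (v (h, w))) - (u - v (h, w))) else 0)
        = (if R i' = h then (x (i', w) : ℝ) else 0) * (Real.log u - Real.log (v (h, w)))
          - (if R i' = h then (1 : ℝ) else 0) * (u - v (h, w)) := by
      intro i'
      by_cases hr : R i' = h
      · simp [hr]
      · simp [hr]
    rw [Finset.sum_congr rfl (fun w' _ => step1 w'), Finset.sum_ite_eq' Finset.univ w]
    simp only [Finset.mem_univ, if_true]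
    rw [Finset.sum_congr rfl (fun i' _ => step2 i'), Finset.sum_sub_distrib,
      ← Finset.sum_mul, ← Finset.sum_mul]
  unfold loglik
  calc ∑ w' : Fin NW, ∑ i' : Fin NI,
        ((x (i', w') : ℝ) * Real.log (Function.update v (h, w) u (R i', w'))
          - Function.update v (h, w) u (R i', w'))
      = ∑ w' : Fin NW, ∑ i' : Fin NI,
          (((x (i', w') : ℝ) * Real.log (v (R i', w')) - v (R i', w'))
            + (if w' = w ∧ R i' = h then
                ((x (i', w) : ℝ) * (Real.log u - Real.log (v (h, w))) - (u - v (h, w))) else 0)) := by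
        exact Finset.sum_congr rfl (fun w' _ => Finset.sum_congr rfl (fun i' _ => key w' i'))
    _ = (∑ w' : Fin NW, ∑ i' : Fin NI,
          ((x (i', w') : ℝ) * Real.log (v (R i', w')) - v (R i', w')))
        + ∑ w' : Fin NW, ∑ i' : Fin NI,
            (if w' = w ∧ R i' = h then
              ((x (i', w) : ℝ) * (Real.log u - Real.log (v (h, w))) - (u - v (h, w))) else 0) := by
        rw [← Finset.sum_add_distrib]
        exact Finset.sum_congr rfl (fun w' _ => Finset.sum_add_distrib)
    _ = _ := by rw [hB]; ring

set_option maxHeartbeats 1000000 in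
/-- Lemma 2, part (prop_6.3): when an oversegmentation `R` of the true
segmentation `R°` is used for estimation, the maximizer `μ̂_n(ν_d,ν_u)` of the
partial-sum log-likelihood over `Θ(R)` recovers the true per-pixel rates: almost
surely, for every pixel `i` and band `w`,
`sup_{(ν_d,ν_u)} |μ̂_n(ν_d,ν_u)(R i, w) − μ°(R° i, w)| → 0`. -/
theorem lemma2_prop_6_3
    {NI NW m0 m : ℕ} (G : SimpleGraph (Fin NI))
    (Cd Cu : ℝ) (hCd : 0 < Cd) (hCdCu : Cd ≤ Cu)
    (epsnu : ℝ) (hepsnu : 0 < epsnu ∧ epsnu < 1)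
    (R0 : Fin NI → Fin m0) (hR0surj : ∀ h, ∃ i, R0 i = h)
    (μ0 : Fin m0 × Fin NW → ℝ)
    -- Assumption 1
    (hA1 : ∀ p, μ0 p ∈ Set.Icc Cd Cu)
    -- Assumption 2
    (hA2 : ∀ p q, p ≠ q → Neighbouring G R0 p q → ∀ w, μ0 (p, w) ≠ μ0 (q, w))
    -- the segmentation used for estimation: an oversegmentation of R° with
    -- nonempty regions
    (R : Fin NI → Fin m) (hRsurj : ∀ h, ∃ i, R i = h) (hR : Overseg R R0)
    {Ω : Type*} [MeasurableSpace Ω] (Pr : Measure Ω) [IsProbabilityMeasure Pr]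
    (X : ℕ → Ω → Fin NI × Fin NW → ℕ)
    (hmeas : ∀ t p, Measurable fun ω => X t ω p)
    (hindep : iIndepFun (β := fun _ : ℕ × (Fin NI × Fin NW) => ℕ)
      (fun q ω => X q.1 ω q.2) Pr)
    (hlaw : ∀ t p, Measure.map (fun ω => X t ω p) Pr
      = poissonMeasure (μ0 (R0 p.1, p.2)).toNNReal)
    -- the (random) maximizer of the partial-sum log-likelihood over Θ(R)
    (μhat : ℕ → AdmPair epsnu → Ω → (Fin m × Fin NW → ℝ))
    (hμhat_mem : ∀ n q ω, μhat n q ω ∈ Theta Cd Cu m NW)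
    (hμhat_max : ∀ (n : ℕ) (q : AdmPair epsnu) (ω : Ω),
      ∀ μ ∈ Theta Cd Cu m NW,
        ∑ t ∈ Finset.Ioc ⌊(n : ℝ) * q.1.1⌋₊ ⌊(n : ℝ) * q.1.2⌋₊, loglik R μ (X t ω)
          ≤ ∑ t ∈ Finset.Ioc ⌊(n : ℝ) * q.1.1⌋₊ ⌊(n : ℝ) * q.1.2⌋₊,
              loglik R (μhat n q ω) (X t ω)) :
    ∀ᵐ ω ∂Pr, ∀ (i : Fin NI) (w : Fin NW),
      Tendsto (fun n : ℕ => ⨆ q : AdmPair epsnu,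
        |μhat n q ω (R i, w) - μ0 (R0 i, w)|) atTop (𝓝 0) := by
  
  classical
  obtain ⟨hε0, hε1⟩ := hepsnu
  set f : (ℕ × (Fin NI × Fin NW)) → Ω → ℕ := fun q ω => X q.1 ω q.2 with hfdef
  have hmeasf : ∀ q, Measurable (f q) := fun q => hmeas q.1 q.2
  have hint1 : ∀ t p, Integrable (fun ω => (X t ω p : ℝ)) Pr := by
    intro t p
    have h1 : Integrable ((fun n : ℕ => (n : ℝ)) ∘ (fun ω => X t ω p)) Pr := by
      rw [← integrable_map_measure ?_ (hmeas t p).aemeasurable]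
      · rw [hlaw t p]; exact aux_poisson_integrable _
      · rw [hlaw t p]; exact measurable_from_top.aestronglyMeasurable
    exact h1
  have hmean1 : ∀ t p, ∫ ω, (X t ω p : ℝ) ∂Pr = μ0 (R0 p.1, p.2) := by
    intro t p
    have h1 := integral_map (μ := Pr) (φ := fun ω => X t ω p) (f := fun n : ℕ => (n : ℝ))
      (hmeas t p).aemeasurable measurable_from_top.aestronglyMeasurable
    rw [hlaw t p, aux_poisson_mean] at h1
    rw [← h1, Real.coe_toNNReal _ (le_trans hCd.le (hA1 (R0 p.1, p.2)).1)]
  have hSLLN : ∀ᵐ ω ∂Pr, ∀ (h : Fin m) (w : Fin NW),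
      Tendsto (fun n : ℕ =>
        (∑ t ∈ Finset.range n, ∑ i' ∈ Finset.univ.filter (fun i'' => R i'' = h),
          (X t ω (i', w) : ℝ)) / n) atTop
        (𝓝 (∑ i' ∈ Finset.univ.filter (fun i'' => R i'' = h), μ0 (R0 i', w))) := by
    rw [ae_all_iff]
    intro h
    rw [ae_all_iff]
    intro w
    set A : Finset (Fin NI) := Finset.univ.filter (fun i'' => R i'' = h) with hA
    set Yn : ℕ → Ω → ℕ := fun t ω => ∑ i' ∈ A, X t ω (i', w) with hYn
    set Y : ℕ → Ω → ℝ := fun t ω => ∑ i' ∈ A, (X t ω (i', w) : ℝ) with hY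
    have hYcast : ∀ t, Y t = (fun k : ℕ => (k : ℝ)) ∘ Yn t := by
      intro t; funext ω; simp [hY, hYn]
    have hident : ∀ t, IdentDistrib (Y t) (Y 0) Pr Pr := by
      intro t
      have hid1 : ∀ i' : Fin NI,
          IdentDistrib (f (t, (i', w))) (f (0, (i', w))) Pr Pr := by
        intro i'
        exact ⟨(hmeas t (i', w)).aemeasurable, (hmeas 0 (i', w)).aemeasurable,
          by rw [hfdef]; simp only []; rw [hlaw t (i', w), hlaw 0 (i', w)]⟩
      have hn := aux_identDistrib_sum hmeasf hindep
        (fun i' : Fin NI => (t, (i', w))) (fun i' : Fin NI => (0, (i', w)))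
        (fun x y hxy => by simpa using hxy) (fun x y hxy => by simpa using hxy) hid1 A
      rw [hYcast t, hYcast 0]
      exact hn.comp measurable_from_top
    have hpind : Pairwise (Function.onFun (IndepFun · · Pr) Y) := by
      intro t s hts
      have hdisj : Disjoint (A.image (fun i' => (t, (i', w))))
          (A.image (fun i' => (s, (i', w)))) := by
        simp only [Finset.disjoint_left, Finset.mem_image]
        rintro x ⟨k, _, rfl⟩ ⟨l, _, hl⟩
        exact hts (congrArg Prod.fst hl).symm
      have hi1 := aux_indepFun_sum hmeasf hindep hdisj
      have e1 : (fun ω => ∑ q ∈ A.image (fun i' => (t, (i', w))), f q ω) = Yn t := by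
        funext ω
        rw [Finset.sum_image (fun x _ y _ hxy => by simpa using hxy)]
      have e2 : (fun ω => ∑ q ∈ A.image (fun i' => (s, (i', w))), f q ω) = Yn s := by
        funext ω
        rw [Finset.sum_image (fun x _ y _ hxy => by simpa using hxy)]
      rw [e1, e2] at hi1
      have h2 := hi1.comp (φ := fun k : ℕ => (k : ℝ)) (ψ := fun k : ℕ => (k : ℝ))
        measurable_from_top measurable_from_top
      simp only [Function.onFun]
      rw [hYcast t, hYcast s]
      exact h2
    have hYint : Integrable (Y 0) Pr := by
      rw [hY]
      exact integrable_finset_sum A (fun i' _ => hint1 0 (i', w))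
    have hslln := strong_law_ae_real Y hYint hpind hident
    have hmeanY : ∫ ω, Y 0 ω ∂Pr = ∑ i' ∈ A, μ0 (R0 i', w) := by
      rw [hY]
      rw [integral_finset_sum A (fun i' _ => hint1 0 (i', w))]
      exact Finset.sum_congr rfl (fun i' _ => hmean1 0 (i', w))
    rw [hmeanY] at hslln
    exact hslln
  -- fix a good ω
  filter_upwards [hSLLN] with ω hω
  intro i w
  haveI : Nonempty (AdmPair epsnu) :=
    ⟨⟨(0, 1), le_refl 0, by norm_num, le_refl 1, by simpa using hε1⟩⟩
  set μb : ℝ := μ0 (R0 i, w) with hμb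
  set A : Finset (Fin NI) := Finset.univ.filter (fun i'' => R i'' = R i) with hA
  have hiA : i ∈ A := by simp [hA]
  set Nr : ℝ := (A.card : ℝ) with hNr
  have hNr1 : 1 ≤ Nr := by
    rw [hNr]
    exact_mod_cast Finset.card_pos.2 ⟨i, hiA⟩
  set Y : ℕ → Ω → ℝ := fun t ω => ∑ i' ∈ A, (X t ω (i', w) : ℝ) with hY
  set U : ℕ → ℝ := fun k => ∑ t ∈ Finset.range k, Y t ω with hUdef
  set L : ℝ := Nr * μb with hL
  have hmeanA : ∑ i' ∈ A, μ0 (R0 i', w) = L := by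
    have hconst : ∀ i' ∈ A, μ0 (R0 i', w) = μ0 (R0 i, w) := by
      intro i' hi'
      rw [hR i' i (by simpa [hA] using hi')]
    rw [Finset.sum_congr rfl hconst, Finset.sum_const, nsmul_eq_mul, hL, hNr, hμb]
  have hUlim : Tendsto (fun n : ℕ => U n / n) atTop (𝓝 L) := by
    have h0 := hω (R i) w
    rw [← hA] at h0
    rw [← hmeanA]
    exact h0
  have habs_bound : ∀ n (q : AdmPair epsnu), |μhat n q ω (R i, w) - μb| ≤ Cu - Cd := by
    intro n q
    have h1 := hμhat_mem n q ω (R i, w)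
    have h2 := hA1 (R0 i, w)
    rw [hμb, abs_sub_le_iff]
    constructor <;> linarith [h1.1, h1.2, h2.1, h2.2]
  have hbdd : ∀ n, BddAbove (Set.range fun q : AdmPair epsnu =>
      |μhat n q ω (R i, w) - μb|) := by
    intro n
    exact ⟨Cu - Cd, by rintro y ⟨q, rfl⟩; exact habs_bound n q⟩
  have hev : ∀ ε : ℝ, 0 < ε → ∀ᶠ n : ℕ in atTop,
      ∀ q : AdmPair epsnu, |μhat n q ω (R i, w) - μb| ≤ ε / 2 := by
    intro ε hε
    have hwin := aux_window hUlim (ε := ε / 2) (δ := epsnu / 2) (by linarith) (by linarith)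
    have h2ev : ∀ᶠ n : ℕ in atTop, (2 : ℝ) ≤ (n : ℝ) * epsnu := by
      have hc := tendsto_natCast_atTop_atTop (R := ℝ)
      filter_upwards [hc.eventually_ge_atTop (2 / epsnu)] with n hn
      rw [div_le_iff₀ hε0] at hn
      linarith
    filter_upwards [hwin, h2ev] with n hwn h2
    intro q
    obtain ⟨hq0, hq1, hq2, hq3⟩ := q.2
    set νd : ℝ := q.1.1 with hνd
    set νu : ℝ := q.1.2 with hνu
    set a : ℕ := ⌊(n : ℝ) * νd⌋₊ with ha
    set b : ℕ := ⌊(n : ℝ) * νu⌋₊ with hb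
    have hnd0 : (0 : ℝ) ≤ (n : ℝ) * νd := mul_nonneg (Nat.cast_nonneg n) hq0
    have ha_le : (a : ℝ) ≤ (n : ℝ) * νd := Nat.floor_le hnd0
    have hb_gt : (n : ℝ) * νu - 1 < (b : ℝ) := Nat.sub_one_lt_floor _
    have hb_le_n : b ≤ n := by
      rw [hb]
      have hble : (n : ℝ) * νu ≤ ((n : ℕ) : ℝ) :=
        mul_le_of_le_one_right (Nat.cast_nonneg n) hq2
      calc ⌊(n : ℝ) * νu⌋₊ ≤ ⌊((n : ℕ) : ℝ)⌋₊ := Nat.floor_le_floor hble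
        _ = n := Nat.floor_natCast n
    have hgapn : (n : ℝ) * epsnu ≤ (n : ℝ) * (νu - νd) :=
      mul_le_mul_of_nonneg_left hq3.le (Nat.cast_nonneg n)
    have hTr_ge : (n : ℝ) * (epsnu / 2) ≤ (b : ℝ) - (a : ℝ) := by nlinarith
    have ha_lt_b : a < b := by
      have h3 : (a : ℝ) < (b : ℝ) := by nlinarith
      exact_mod_cast h3
    set Tr : ℝ := ((b - a : ℕ) : ℝ) with hTr
    have hTr_eq : Tr = (b : ℝ) - (a : ℝ) := by
      rw [hTr, Nat.cast_sub ha_lt_b.le]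
    have hTr_pos : 0 < Tr := by rw [hTr_eq]; nlinarith
    set v : Fin m × Fin NW → ℝ := μhat n q ω with hv
    set Sq : ℝ := ∑ t ∈ Finset.Ioc a b, Y t ω with hSq
    have hSq0 : 0 ≤ Sq := by
      rw [hSq]
      apply Finset.sum_nonneg
      intro t _
      exact Finset.sum_nonneg (fun i' _ => Nat.cast_nonneg _)
    have hmaxg : ∀ u ∈ Set.Icc Cd Cu,
        Sq * Real.log u - Nr * Tr * u
          ≤ Sq * Real.log (v (R i, w)) - Nr * Tr * v (R i, w) := by
      intro u hu
      have hupd : Function.update v (R i, w) u ∈ Theta Cd Cu m NW := by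
        intro p
        by_cases hp : p = (R i, w)
        · rw [hp, Function.update_self]; exact hu
        · rw [Function.update_of_ne hp]; exact hμhat_mem n q ω p
      have hineq := hμhat_max n q ω _ hupd
      rw [← hv, ← hνd, ← hνu, ← ha, ← hb] at hineq
      have hre : ∀ t : ℕ, loglik R (Function.update v (R i, w) u) (X t ω)
          = loglik R v (X t ω) + (Y t ω) * (Real.log u - Real.log (v (R i, w)))
            - Nr * (u - v (R i, w)) := by
        intro t
        rw [aux_loglik_update]
        have hc1 : (∑ i' : Fin NI,
            if R i' = (R i, w).1 then (X t ω (i', (R i, w).2) : ℝ) else 0) = Y t ω := by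
          rw [hY]
          exact (Finset.sum_filter _ _).symm
        have hc2 : (∑ i' : Fin NI, if R i' = (R i, w).1 then (1 : ℝ) else 0) = Nr := by
          rw [Finset.sum_boole, hNr, hA]
        rw [hc1, hc2]
      rw [Finset.sum_congr rfl (fun t _ => hre t)] at hineq
      rw [Finset.sum_sub_distrib, Finset.sum_add_distrib, ← Finset.sum_mul,
        Finset.sum_const, Nat.card_Ioc, nsmul_eq_mul, ← hSq, ← hTr] at hineq
      nlinarith [hineq]
    have hNT : 0 < Nr * Tr := by nlinarith
    have hvc : v (R i, w) = max Cd (min Cu (Sq / (Nr * Tr))) :=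
      aux_argmax_clamp hSq0 hNT hCd hCdCu
        (by rw [hv]; exact hμhat_mem n q ω (R i, w)) hmaxg
    have hclose : |v (R i, w) - μb| ≤ |Sq / (Nr * Tr) - μb| := by
      rw [hvc, hμb]
      exact aux_clamp_close (hA1 (R0 i, w)).1 (hA1 (R0 i, w)).2
    have hSU : Sq = U (b + 1) - U (a + 1) := by
      rw [hSq, hUdef]
      have h3 : Finset.Ioc a b = Finset.Ico (a + 1) (b + 1) := (Finset.Ico_add_one_add_one_eq_Ioc a b).symm
      rw [h3, Finset.sum_Ico_eq_sub _ (by omega : a + 1 ≤ b + 1)]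
    have hcasteq : ((b + 1 : ℕ) : ℝ) - ((a + 1 : ℕ) : ℝ) = Tr := by
      rw [hTr_eq]; push_cast; ring
    have happ : |U (b + 1) - U (a + 1) - (((b + 1 : ℕ) : ℝ) - ((a + 1 : ℕ) : ℝ)) * L|
        ≤ ε / 2 * ((n : ℝ) * (epsnu / 2)) := by
      apply hwn (a + 1) (b + 1) (by omega) (by omega)
      rw [hcasteq, hTr_eq]
      linarith [hTr_ge]
    have happ2 : |Sq - Tr * L| ≤ ε / 2 * Tr := by
      calc |Sq - Tr * L|
          = |U (b + 1) - U (a + 1) - (((b + 1 : ℕ) : ℝ) - ((a + 1 : ℕ) : ℝ)) * L| := by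
            rw [hSU, hcasteq]
        _ ≤ ε / 2 * ((n : ℝ) * (epsnu / 2)) := happ
        _ ≤ ε / 2 * Tr := by nlinarith [mul_nonneg hε.le (sub_nonneg.2 hTr_ge)]
    have hfrac : |Sq / (Nr * Tr) - μb| ≤ ε / 2 := by
      have heq : Sq / (Nr * Tr) - μb = (Sq - Tr * L) / (Nr * Tr) := by
        rw [hL]; field_simp
      rw [heq, abs_div, abs_of_pos hNT, div_le_iff₀ hNT]
      calc |Sq - Tr * L| ≤ ε / 2 * Tr := happ2
        _ ≤ ε / 2 * (Nr * Tr) := by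
          nlinarith [mul_nonneg (mul_nonneg hε.le hTr_pos.le) (sub_nonneg.2 hNr1)]
    calc |μhat n q ω (R i, w) - μb| = |v (R i, w) - μb| := by rw [hv]
      _ ≤ |Sq / (Nr * Tr) - μb| := hclose
      _ ≤ ε / 2 := hfrac
  -- conclude
  rw [Metric.tendsto_atTop]
  intro ε hε
  obtain ⟨N₀, hN₀⟩ := (hev ε hε).exists_forall_of_atTop
  refine ⟨N₀, fun n hn => ?_⟩
  have hsup_le : (⨆ q : AdmPair epsnu, |μhat n q ω (R i, w) - μb|) ≤ ε / 2 :=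
    ciSup_le (hN₀ n hn)
  have hsup_nonneg : 0 ≤ ⨆ q : AdmPair epsnu, |μhat n q ω (R i, w) - μb| :=
    le_trans (abs_nonneg _) (le_ciSup (hbdd n) (Classical.arbitrary _))
  rw [Real.dist_eq, sub_zero, abs_of_nonneg hsup_nonneg]
  linarith
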